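/- Let L > 0 and let v be a C^2 solution of ∂_t^2 v − ∂_s^2 v = F on [0,L) × R, with odd initial data v₀, v₁ and odd forcing F(t,·), such that: v₀(s) = s·u₀(|s|) with u₀ ≥ 0 on (0,L) and r ↦ r u₀(r) nondecreasing on (0,L); v₁(s) = s·u₁(|s|) with u₁ ≥ 0 on (0,L); and F(t,s) = s·f(t,|s|) with f(t,r) ≥ 0 for 0 < r < L − t. Then v(t,s) ≥ 0 for all 0 < t < L and 0 < s < L − t. -/

import Mathlib

open Set intervalIntegral

/-- second mixed quantity: the wave operator `∂_tt - ∂_ss` expressed via the double fderiv. -/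
noncomputable def Fg (g : ℝ × ℝ → ℝ) : ℝ × ℝ → ℝ := fun z =>
  fderiv ℝ (fderiv ℝ g) z (1, 0) (1, 0) - fderiv ℝ (fderiv ℝ g) z (0, 1) (0, 1)

lemma e11 : ((1 : ℝ), (1 : ℝ)) = ((1:ℝ), (0:ℝ)) + ((0:ℝ), (1:ℝ)) := by
  simp [Prod.ext_iff]

lemma e1m1 : ((1 : ℝ), (-1 : ℝ)) = ((1:ℝ), (0:ℝ)) - ((0:ℝ), (1:ℝ)) := by
  simp [Prod.ext_iff]

lemma e0m1 : ((0 : ℝ), (-1 : ℝ)) = -((0:ℝ), (1:ℝ)) := by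
  simp [Prod.ext_iff]

lemma pathD {g : ℝ × ℝ → ℝ} (hg : ContDiff ℝ 2 g) (a b p q t : ℝ) :
    HasDerivAt (fun τ => g (a + τ * p, b + τ * q))
      (fderiv ℝ g (a + t * p, b + t * q) (p, q)) t := by
  have h1 : HasDerivAt (fun τ : ℝ => a + τ * p) p t := by
    simpa using ((hasDerivAt_id t).mul_const p).const_add a
  have h2 : HasDerivAt (fun τ : ℝ => b + τ * q) q t := by
    simpa using ((hasDerivAt_id t).mul_const q).const_add b
  exact ((hg.differentiable (by norm_num) _).hasFDerivAt).comp_hasDerivAt t (h1.prodMk h2)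

lemma pathD2 {g : ℝ × ℝ → ℝ} (hg : ContDiff ℝ 2 g) (u : ℝ × ℝ) (a b p q t : ℝ) :
    HasDerivAt (fun τ => fderiv ℝ g (a + τ * p, b + τ * q) u)
      (fderiv ℝ (fderiv ℝ g) (a + t * p, b + t * q) (p, q) u) t := by
  have h1 : HasDerivAt (fun τ : ℝ => a + τ * p) p t := by
    simpa using ((hasDerivAt_id t).mul_const p).const_add a
  have h2 : HasDerivAt (fun τ : ℝ => b + τ * q) q t := by
    simpa using ((hasDerivAt_id t).mul_const q).const_add b
  have hD1 : Differentiable ℝ (fderiv ℝ g) :=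
    (hg.fderiv_right (m := 1) (by norm_num)).differentiable (by norm_num)
  have h := ((hD1 _).hasFDerivAt).comp_hasDerivAt t (h1.prodMk h2)
  exact ((ContinuousLinearMap.apply ℝ ℝ u).hasFDerivAt).comp_hasDerivAt t h

lemma D2_cross {g : ℝ × ℝ → ℝ} (hg : ContDiff ℝ 2 g) (z : ℝ × ℝ) :
    fderiv ℝ (fderiv ℝ g) z (1, -1) (1, 1) = Fg g z := by
  have hsymm : ∀ a b : ℝ × ℝ,
      fderiv ℝ (fderiv ℝ g) z a b = fderiv ℝ (fderiv ℝ g) z b a :=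
    second_derivative_symmetric (fun y => (hg.differentiable (by norm_num) y).hasFDerivAt)
      (((hg.fderiv_right (m := 1) (by norm_num)).differentiable (by norm_num) z).hasFDerivAt)
  rw [e1m1, e11, map_sub]
  simp only [ContinuousLinearMap.sub_apply, map_add, ContinuousLinearMap.add_apply]
  rw [hsymm (0,1) (1,0)]
  unfold Fg
  ring

/-- d'Alembert-type representation along characteristics. -/
lemma wave_repr {g : ℝ × ℝ → ℝ} (hg : ContDiff ℝ 2 g) (c a T : ℝ) :
    g (T, c + T) = g (a, c + a)
      + ∫ τ in a..T, (fderiv ℝ g (0, c + 2*τ) (1, 1)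
          + ∫ σ in (0:ℝ)..τ, Fg g (σ, c + 2*τ - σ)) := by
  have contD1 : Continuous (fderiv ℝ g) :=
    (hg.fderiv_right (m := 1) (by norm_num)).continuous
  have contD2 : Continuous (fderiv ℝ (fderiv ℝ g)) :=
    ((hg.fderiv_right (m := 1) (by norm_num)).fderiv_right (m := 0) (by norm_num)).continuous
  have hQ : ∀ τ : ℝ, (∫ σ in (0:ℝ)..τ, Fg g (σ, c + 2*τ - σ))
      = fderiv ℝ g (τ, c + τ) (1, 1) - fderiv ℝ g (0, c + 2*τ) (1, 1) := by
    intro τ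
    have hd : ∀ σ ∈ uIcc (0:ℝ) τ,
        HasDerivAt (fun σ' => fderiv ℝ g (σ', c + 2*τ - σ') (1, 1))
          (Fg g (σ, c + 2*τ - σ)) σ := by
      intro σ _
      have h := pathD2 hg (1,1) 0 (c + 2*τ) 1 (-1) σ
      rw [D2_cross hg] at h
      simpa [mul_neg, mul_one, sub_eq_add_neg] using h
    have hint : IntervalIntegrable (fun σ => Fg g (σ, c + 2*τ - σ)) MeasureTheory.volume 0 τ := by
      apply Continuous.intervalIntegrable
      have hp : Continuous fun σ : ℝ => ((σ, c + 2*τ - σ) : ℝ × ℝ) := by fun_prop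
      simp only [Fg]
      exact (((contD2.comp hp).clm_apply continuous_const).clm_apply continuous_const).sub
        (((contD2.comp hp).clm_apply continuous_const).clm_apply continuous_const)
    have hFT := integral_eq_sub_of_hasDerivAt hd hint
    rw [show c + 2*τ - τ = c + τ from by ring, show c + 2*τ - (0:ℝ) = c + 2*τ from by ring] at hFT
    exact hFT
  have hP : ∀ τ ∈ uIcc a T,
      HasDerivAt (fun τ' => g (τ', c + τ')) (fderiv ℝ g (τ, c + τ) (1, 1)) τ := by
    intro τ _
    simpa using pathD hg 0 c 1 1 τ
  have hint1 : IntervalIntegrable (fun τ => fderiv ℝ g (τ, c + τ) (1, 1))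
      MeasureTheory.volume a T := by
    apply Continuous.intervalIntegrable
    have hp : Continuous fun τ : ℝ => ((τ, c + τ) : ℝ × ℝ) := by fun_prop
    exact (contD1.comp hp).clm_apply continuous_const
  have key := integral_eq_sub_of_hasDerivAt hP hint1
  have hcongr : (∫ τ in a..T, (fderiv ℝ g (0, c + 2*τ) (1, 1)
      + ∫ σ in (0:ℝ)..τ, Fg g (σ, c + 2*τ - σ)))
      = ∫ τ in a..T, fderiv ℝ g (τ, c + τ) (1, 1) := by
    apply integral_congr
    intro τ _
    dsimp only
    rw [hQ τ]; ring
  rw [hcongr, key]; ring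

/-- Positivity lemma for the 1D reduction of the radial 3D linear wave equation:
a `C²` solution of `∂_t²v − ∂_s²v = F` with odd nonnegative data and forcing
(in the sense below) is nonnegative inside the light cone `{0 < s < L − t}`. -/
theorem positivity_lemma (L : ℝ) (hL : 0 < L)
    (v : ℝ → ℝ → ℝ) (u₀ u₁ : ℝ → ℝ) (f : ℝ → ℝ → ℝ)
    (hv : ContDiff ℝ 2 (Function.uncurry v))
    (hwave : ∀ t s : ℝ, 0 ≤ t → t < L →
      deriv (fun τ => deriv (fun τ' => v τ' s) τ) t
        - deriv (fun σ => deriv (fun σ' => v t σ') σ) s = s * f t |s|)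
    (h0 : ∀ s : ℝ, v 0 s = s * u₀ |s|)
    (h1 : ∀ s : ℝ, deriv (fun τ => v τ s) 0 = s * u₁ |s|)
    (hu₀pos : ∀ r : ℝ, 0 < r → r < L → 0 ≤ u₀ r)
    (hu₀mono : MonotoneOn (fun r => r * u₀ r) (Set.Ioo 0 L))
    (hu₁pos : ∀ r : ℝ, 0 < r → r < L → 0 ≤ u₁ r)
    (hf : ∀ t r : ℝ, 0 < t → t < L → 0 < r → r < L - t → 0 ≤ f t r) :
    ∀ t s : ℝ, 0 < t → t < L → 0 < s → s < L - t → 0 ≤ v t s := by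
  -- partial derivative identifications for v
  have hDt : ∀ t s : ℝ, HasDerivAt (fun τ => v τ s)
      (fderiv ℝ (Function.uncurry v) (t, s) (1, 0)) t := by
    intro t s; simpa using pathD hv 0 s 1 0 t
  have hDs : ∀ t s : ℝ, HasDerivAt (fun σ => v t σ)
      (fderiv ℝ (Function.uncurry v) (t, s) (0, 1)) s := by
    intro t s; simpa using pathD hv t 0 0 1 s
  have hDtt : ∀ t s : ℝ, HasDerivAt (fun τ => fderiv ℝ (Function.uncurry v) (τ, s) (1, 0))
      (fderiv ℝ (fderiv ℝ (Function.uncurry v)) (t, s) (1, 0) (1, 0)) t := by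
    intro t s; simpa using pathD2 hv (1,0) 0 s 1 0 t
  have hDss : ∀ t s : ℝ, HasDerivAt (fun σ => fderiv ℝ (Function.uncurry v) (t, σ) (0, 1))
      (fderiv ℝ (fderiv ℝ (Function.uncurry v)) (t, s) (0, 1) (0, 1)) s := by
    intro t s; simpa using pathD2 hv (0,1) t 0 0 1 s
  -- the wave equation in `Fg` form
  have wave' : ∀ t s : ℝ, 0 ≤ t → t < L →
      Fg (Function.uncurry v) (t, s) = s * f t |s| := by
    intro t s ht htL
    have e₁ : (fun τ => deriv (fun τ' => v τ' s) τ)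
        = fun τ => fderiv ℝ (Function.uncurry v) (τ, s) (1, 0) :=
      funext fun τ => (hDt τ s).deriv
    have e₂ : (fun σ => deriv (fun σ' => v t σ') σ)
        = fun σ => fderiv ℝ (Function.uncurry v) (t, σ) (0, 1) :=
      funext fun σ => (hDs t σ).deriv
    have hw := hwave t s ht htL
    rw [e₁, e₂, (hDtt t s).deriv, (hDss t s).deriv] at hw
    exact hw
  -- initial velocity in fderiv form
  have h1' : ∀ s : ℝ, fderiv ℝ (Function.uncurry v) (0, s) (1, 0) = s * u₁ |s| := by
    intro s; rw [← (hDt 0 s).deriv]; exact h1 s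
  -- monotonicity of s ↦ v 0 s on [0, L)
  have hmono : ∀ x y : ℝ, 0 ≤ x → x ≤ y → y < L → v 0 x ≤ v 0 y := by
    intro x y hx hxy hyL
    rcases eq_or_lt_of_le hxy with rfl | hlt
    · exact le_refl _
    rcases eq_or_lt_of_le hx with rfl | hxpos
    · rw [h0 0, h0 y, abs_of_pos hlt]
      simpa using mul_nonneg hlt.le (hu₀pos y hlt hyL)
    · rw [h0 x, h0 y, abs_of_pos hxpos, abs_of_pos (hxpos.trans hlt)]
      exact hu₀mono ⟨hxpos, lt_of_le_of_lt hxy hyL⟩ ⟨hxpos.trans hlt, hyL⟩ hxy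
  -- nonnegativity of the spatial derivative of the data at nonnegative points
  have hD01 : ∀ y : ℝ, 0 ≤ y → y < L →
      0 ≤ fderiv ℝ (Function.uncurry v) (0, y) (0, 1) := by
    intro y hy hyL
    have hdw := ((hDs 0 y).hasDerivWithinAt (s := Set.Ioi y))
    rw [hasDerivWithinAt_iff_tendsto_slope,
      Set.diff_singleton_eq_self (by simp : y ∉ Set.Ioi y)] at hdw
    refine ge_of_tendsto hdw ?_
    filter_upwards [self_mem_nhdsWithin,
        nhdsWithin_le_nhds (Iio_mem_nhds hyL)] with x hx1 hx2
    rw [slope_def_field]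
    apply div_nonneg
    · have := hmono y x hy (le_of_lt hx1) hx2; linarith
    · have : y < x := hx1; linarith
  -- the odd reflection E t s = v t s + v t (-s)
  set E : ℝ → ℝ → ℝ := fun t s => v t s + v t (-s) with hEdef
  have hE : ContDiff ℝ 2 (Function.uncurry E) := by
    have hRefl : ContDiff ℝ 2 (fun z : ℝ × ℝ => Function.uncurry v (z.1, -z.2)) :=
      hv.comp (ContDiff.prodMk contDiff_fst contDiff_snd.neg)
    exact hv.add hRefl
  have hE0 : ∀ y : ℝ, E 0 y = 0 := by
    intro y
    simp only [hEdef]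
    rw [h0 y, h0 (-y), abs_neg]
    ring
  -- first partials of E
  have hD1Et : ∀ t s : ℝ, fderiv ℝ (Function.uncurry E) (t, s) (1, 0)
      = fderiv ℝ (Function.uncurry v) (t, s) (1, 0)
        + fderiv ℝ (Function.uncurry v) (t, -s) (1, 0) := by
    intro t s
    have ha : HasDerivAt (fun τ => E τ s)
        (fderiv ℝ (Function.uncurry E) (t, s) (1, 0)) t := by
      simpa using pathD hE 0 s 1 0 t
    have hb : HasDerivAt (fun τ => E τ s)
        (fderiv ℝ (Function.uncurry v) (t, s) (1, 0)
          + fderiv ℝ (Function.uncurry v) (t, -s) (1, 0)) t := (hDt t s).add (hDt t (-s))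
    exact ha.unique hb
  have hD1Es : ∀ t s : ℝ, fderiv ℝ (Function.uncurry E) (t, s) (0, 1)
      = fderiv ℝ (Function.uncurry v) (t, s) (0, 1)
        - fderiv ℝ (Function.uncurry v) (t, -s) (0, 1) := by
    intro t s
    have ha : HasDerivAt (fun σ => E t σ)
        (fderiv ℝ (Function.uncurry E) (t, s) (0, 1)) s := by
      simpa using pathD hE t 0 0 1 s
    have hneg : HasDerivAt (fun σ => v t (-σ))
        (-(fderiv ℝ (Function.uncurry v) (t, -s) (0, 1))) s := by
      have h := pathD hv t 0 0 (-1) s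
      rw [e0m1, map_neg] at h
      simpa [mul_neg, mul_one] using h
    have hb : HasDerivAt (fun σ => E t σ)
        (fderiv ℝ (Function.uncurry v) (t, s) (0, 1)
          + -(fderiv ℝ (Function.uncurry v) (t, -s) (0, 1))) s := (hDs t s).add hneg
    rw [sub_eq_add_neg]
    exact ha.unique hb
  -- second partials of E
  have hD2Ett : ∀ t s : ℝ, fderiv ℝ (fderiv ℝ (Function.uncurry E)) (t, s) (1, 0) (1, 0)
      = fderiv ℝ (fderiv ℝ (Function.uncurry v)) (t, s) (1, 0) (1, 0)
        + fderiv ℝ (fderiv ℝ (Function.uncurry v)) (t, -s) (1, 0) (1, 0) := by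
    intro t s
    have ha : HasDerivAt (fun τ => fderiv ℝ (Function.uncurry E) (τ, s) (1, 0))
        (fderiv ℝ (fderiv ℝ (Function.uncurry E)) (t, s) (1, 0) (1, 0)) t := by
      simpa using pathD2 hE (1,0) 0 s 1 0 t
    have hfun : (fun τ => fderiv ℝ (Function.uncurry E) (τ, s) (1, 0))
        = fun τ => fderiv ℝ (Function.uncurry v) (τ, s) (1, 0)
          + fderiv ℝ (Function.uncurry v) (τ, -s) (1, 0) := funext fun τ => hD1Et τ s
    rw [hfun] at ha
    exact ha.unique ((hDtt t s).add (hDtt t (-s)))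
  have hD2Ess : ∀ t s : ℝ, fderiv ℝ (fderiv ℝ (Function.uncurry E)) (t, s) (0, 1) (0, 1)
      = fderiv ℝ (fderiv ℝ (Function.uncurry v)) (t, s) (0, 1) (0, 1)
        + fderiv ℝ (fderiv ℝ (Function.uncurry v)) (t, -s) (0, 1) (0, 1) := by
    intro t s
    have ha : HasDerivAt (fun σ => fderiv ℝ (Function.uncurry E) (t, σ) (0, 1))
        (fderiv ℝ (fderiv ℝ (Function.uncurry E)) (t, s) (0, 1) (0, 1)) s := by
      simpa using pathD2 hE (0,1) t 0 0 1 s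
    have hfun : (fun σ => fderiv ℝ (Function.uncurry E) (t, σ) (0, 1))
        = fun σ => fderiv ℝ (Function.uncurry v) (t, σ) (0, 1)
          - fderiv ℝ (Function.uncurry v) (t, -σ) (0, 1) := funext fun σ => hD1Es t σ
    rw [hfun] at ha
    have hb2 : HasDerivAt (fun σ => fderiv ℝ (Function.uncurry v) (t, -σ) (0, 1))
        (-(fderiv ℝ (fderiv ℝ (Function.uncurry v)) (t, -s) (0, 1) (0, 1))) s := by
      have h := pathD2 hv (0,1) t 0 0 (-1) s
      rw [e0m1, map_neg, ContinuousLinearMap.neg_apply] at h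
      simpa [mul_neg, mul_one] using h
    have hb := (hDss t s).sub hb2
    rw [sub_neg_eq_add] at hb
    exact ha.unique hb
  have hFgE : ∀ t s : ℝ, Fg (Function.uncurry E) (t, s)
      = Fg (Function.uncurry v) (t, s) + Fg (Function.uncurry v) (t, -s) := by
    intro t s
    unfold Fg
    rw [hD2Ett t s, hD2Ess t s]
    ring
  -- E has vanishing data
  have hEt0 : ∀ y : ℝ, fderiv ℝ (Function.uncurry E) (0, y) (1, 0) = 0 := by
    intro y
    rw [hD1Et 0 y, h1' y, h1' (-y), abs_neg]
    ring
  have hEs0 : ∀ y : ℝ, fderiv ℝ (Function.uncurry E) (0, y) (0, 1) = 0 := by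
    intro y
    have ha : HasDerivAt (fun σ => E 0 σ)
        (fderiv ℝ (Function.uncurry E) (0, y) (0, 1)) y := by
      simpa using pathD hE 0 0 0 1 y
    have hfun : (fun σ => E 0 σ) = fun _ => (0:ℝ) := funext hE0
    rw [hfun] at ha
    exact ha.unique (hasDerivAt_const y 0)
  have hE11 : ∀ y : ℝ, fderiv ℝ (Function.uncurry E) (0, y) (1, 1) = 0 := by
    intro y
    rw [e11, map_add, hEt0 y, hEs0 y, add_zero]
  -- oddness: v vanishes on the axis s = 0
  have hodd : ∀ t : ℝ, 0 ≤ t → t < L → v t 0 = 0 := by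
    intro t ht htL
    have hr := wave_repr hE (-t) 0 t
    rw [show -t + t = (0:ℝ) from by ring, show -t + 0 = -t from by ring] at hr
    have hint0 : (∫ τ in (0:ℝ)..t, (fderiv ℝ (Function.uncurry E) (0, -t + 2*τ) (1, 1)
        + ∫ σ in (0:ℝ)..τ, Fg (Function.uncurry E) (σ, -t + 2*τ - σ))) = 0 := by
      have hz : ∀ τ ∈ uIcc (0:ℝ) t, (fderiv ℝ (Function.uncurry E) (0, -t + 2*τ) (1, 1)
          + ∫ σ in (0:ℝ)..τ, Fg (Function.uncurry E) (σ, -t + 2*τ - σ)) = 0 := by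
        intro τ hτ
        rw [uIcc_of_le ht] at hτ
        have hz2 : ∀ σ ∈ uIcc (0:ℝ) τ, Fg (Function.uncurry E) (σ, -t + 2*τ - σ) = 0 := by
          intro σ hσ
          rw [uIcc_of_le hτ.1] at hσ
          have hσL : σ < L := lt_of_le_of_lt (hσ.2.trans hτ.2) htL
          rw [hFgE, wave' σ _ hσ.1 hσL, wave' σ _ hσ.1 hσL, abs_neg]
          ring
        rw [hE11, intervalIntegral.integral_congr hz2]
        simp
      calc (∫ τ in (0:ℝ)..t, (fderiv ℝ (Function.uncurry E) (0, -t + 2*τ) (1, 1)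
            + ∫ σ in (0:ℝ)..τ, Fg (Function.uncurry E) (σ, -t + 2*τ - σ)))
          = ∫ τ in (0:ℝ)..t, (0:ℝ) := intervalIntegral.integral_congr hz
        _ = 0 := by simp
    rw [hint0] at hr
    have hE00 : Function.uncurry E (0, -t) = 0 := hE0 (-t)
    rw [hE00] at hr
    have : E t 0 = 0 := by simpa using hr
    simp only [hEdef, neg_zero] at this
    linarith
  -- main argument
  intro t₀ s₀ ht₀ ht₀L hs₀ hs₀L
  set c := s₀ - t₀ with hc
  have hkey : ∀ a : ℝ, 0 ≤ a → a ≤ t₀ → 0 ≤ c + a →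
      0 ≤ ∫ τ in a..t₀, (fderiv ℝ (Function.uncurry v) (0, c + 2*τ) (1, 1)
        + ∫ σ in (0:ℝ)..τ, Fg (Function.uncurry v) (σ, c + 2*τ - σ)) := by
    intro a ha hat hca
    apply intervalIntegral.integral_nonneg hat
    intro τ hτ
    have hτ0 : 0 ≤ τ := ha.trans hτ.1
    have hy0 : 0 ≤ c + 2*τ := by linarith [hτ.1]
    have hyL : c + 2*τ < L := by
      have : τ ≤ t₀ := hτ.2
      have : c + 2*τ ≤ s₀ + t₀ := by rw [hc]; linarith
      linarith
    have hterm1 : 0 ≤ fderiv ℝ (Function.uncurry v) (0, c + 2*τ) (1, 1) := by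
      rw [e11, map_add, h1' _]
      have h1t : 0 ≤ (c + 2*τ) * u₁ |c + 2*τ| := by
        rcases eq_or_lt_of_le hy0 with h | h
        · rw [← h]; simp
        · rw [abs_of_pos h]; exact mul_nonneg h.le (hu₁pos _ h hyL)
      exact add_nonneg h1t (hD01 _ hy0 hyL)
    have hterm2 : 0 ≤ ∫ σ in (0:ℝ)..τ, Fg (Function.uncurry v) (σ, c + 2*τ - σ) := by
      apply intervalIntegral.integral_nonneg_of_ae_restrict hτ0
      have hne : ∀ᵐ σ ∂(MeasureTheory.volume.restrict (Icc (0:ℝ) τ)), σ ≠ 0 := by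
        apply MeasureTheory.ae_restrict_of_ae
        rw [MeasureTheory.ae_iff]
        have hset : {a : ℝ | ¬ a ≠ 0} = {(0:ℝ)} := by ext x; simp
        rw [hset]
        exact MeasureTheory.measure_singleton 0
      have hmem : ∀ᵐ σ ∂(MeasureTheory.volume.restrict (Icc (0:ℝ) τ)), σ ∈ Icc (0:ℝ) τ :=
        MeasureTheory.ae_restrict_mem measurableSet_Icc
      filter_upwards [hne, hmem] with σ hσ0 hσI
      have hσpos : 0 < σ := lt_of_le_of_ne hσI.1 (Ne.symm hσ0)
      have hσL : σ < L := lt_of_le_of_lt (hσI.2.trans hτ.2) ht₀L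
      have hx0 : 0 ≤ c + 2*τ - σ := by linarith [hσI.2, hτ.1]
      rw [wave' σ (c + 2*τ - σ) hσpos.le hσL]
      rcases eq_or_lt_of_le hx0 with h | h
      · rw [← h]; simp
      · rw [abs_of_pos h]
        apply mul_nonneg h.le
        exact hf σ _ hσpos hσL h (by linarith)
    exact add_nonneg hterm1 hterm2
  rcases le_or_gt t₀ s₀ with hcase | hcase
  · -- away from the axis: base point on t = 0
    have hr := wave_repr hv c 0 t₀
    rw [show c + t₀ = s₀ from by rw [hc]; ring,
      show c + 0 = c from by ring] at hr
    simp only [Function.uncurry_apply_pair] at hr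
    rw [hr]
    have hbase : 0 ≤ v 0 c := by
      rw [h0 c]
      have hc0 : 0 ≤ c := by rw [hc]; linarith
      rcases eq_or_lt_of_le hc0 with h | h
      · rw [← h]; simp
      · rw [abs_of_pos h]
        refine mul_nonneg h.le (hu₀pos _ h ?_)
        rw [hc]; linarith
    exact add_nonneg hbase (hkey 0 le_rfl ht₀.le (by rw [hc]; linarith))
  · -- reflected case: base point on the axis s = 0
    have hr := wave_repr hv c (t₀ - s₀) t₀
    rw [show c + t₀ = s₀ from by rw [hc]; ring,
      show c + (t₀ - s₀) = 0 from by rw [hc]; ring] at hr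
    simp only [Function.uncurry_apply_pair] at hr
    rw [hr, hodd (t₀ - s₀) (by linarith) (by linarith)]
    have := hkey (t₀ - s₀) (by linarith) (by linarith) (by rw [hc]; linarith)
    simpa using this
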